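/- arXiv:1603.01813 — 4 statements merged into one kernel-verified Lean document; each statement's English description precedes it below -/
import Mathlib

section
/- Combining the two previous facts: if φ(y) = ∏_{i=1}^{n+1} P_i(y)^{λ_i} with P_i affine with pairwise distinct roots and λ_i nonzero integers, and I is an open interval containing no root of any P_i, then the equation φ(y) = 1 has at most n+1 solutions in I. -/
open Polynomial Finset in
theorem stmt4 (n : ℕ) (a b : Fin (n+1) → ℝ) (hb : ∀ i, b i ≠ 0)
    (l : Fin (n+1) → ℤ) (hl : ∀ i, l i ≠ 0)
    (P : Fin (n+1) → ℝ → ℝ) (hP : ∀ i y, P i y = a i + b i * y)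
    (hdist : ∀ i j (y : ℝ), P i y = 0 → P j y = 0 → i = j)
    (u v : ℝ) (hroots : ∀ y ∈ Set.Ioo u v, ∀ i, P i y ≠ 0)
    (φ : ℝ → ℝ) (hφ : ∀ y, φ y = ∏ i, (P i y) ^ (l i)) :
    ∀ S : Finset ℝ, ↑S ⊆ Set.Ioo u v → (∀ y ∈ S, φ y = 1) → S.card ≤ n + 1 := by
  classical
  intro S hS hS1
  by_contra hcard
  push_neg at hcard
  -- the auxiliary polynomial Q
  set Q : Polynomial ℝ :=
    ∑ i : Fin (n+1), C ((l i : ℝ) * b i) *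
      ∏ j ∈ univ.erase i, (C (a j) + C (b j) * X) with hQ
  have hQeval : ∀ y : ℝ, Q.eval y
      = ∑ i : Fin (n+1), (l i : ℝ) * b i * ∏ j ∈ univ.erase i, P j y := by
    intro y
    simp [hQ, eval_finset_sum, eval_prod, hP, mul_assoc]
  -- degree bound
  have hdeg : Q.natDegree ≤ n := by
    refine natDegree_sum_le_of_forall_le _ _ fun i _ => ?_
    refine (natDegree_C_mul_le _ _).trans ?_
    refine (natDegree_prod_le _ _).trans ?_
    have h1 : ∀ j : Fin (n+1), (C (a j) + C (b j) * X).natDegree ≤ 1 := fun j =>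
      (natDegree_add_le _ _).trans
        (max_le (by simp) ((natDegree_C_mul_le _ _).trans natDegree_X_le))
    refine le_trans (Finset.sum_le_sum (g := fun _ => (1 : ℕ)) fun j _ => h1 j) ?_
    simp [Finset.card_erase_of_mem]
  -- Q is nonzero
  have hQne : Q ≠ 0 := by
    set r : ℝ := -(a 0) / b 0 with hr
    have hP0 : P 0 r = 0 := by rw [hP, hr, mul_comm (b 0), div_mul_cancel₀ _ (hb 0), add_neg_cancel]
    have hPj : ∀ j : Fin (n+1), j ≠ 0 → P j r ≠ 0 := fun j hj h => hj (hdist j 0 r h hP0)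
    have hev : Q.eval r ≠ 0 := by
      rw [hQeval, Finset.sum_eq_single (0 : Fin (n+1))]
      · exact mul_ne_zero (mul_ne_zero (Int.cast_ne_zero.2 (hl 0)) (hb 0))
          (Finset.prod_ne_zero_iff.2 fun j hj => hPj j (Finset.ne_of_mem_erase hj))
      · intro i _ hi
        rw [Finset.prod_eq_zero (Finset.mem_erase.2 ⟨Ne.symm hi, Finset.mem_univ _⟩) hP0,
          mul_zero]
      · simp
    intro h
    exact hev (by simp [h])
  -- derivative of φ
  have key : ∀ y ∈ Set.Ioo u v, HasDerivAt φ
      (∑ i : Fin (n+1), (∏ j ∈ univ.erase i, P j y ^ l j) *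
        (((l i : ℝ) * P i y ^ (l i - 1)) * b i)) y := by
    intro y hy
    have h1 : ∀ i : Fin (n+1), HasDerivAt (fun y => P i y ^ l i)
        (((l i : ℝ) * P i y ^ (l i - 1)) * b i) y := by
      intro i
      have hlin : HasDerivAt (fun y : ℝ => a i + b i * y) (b i) y := by
        simpa using ((hasDerivAt_id y).const_mul (b i)).const_add (a i)
      have hz := (hasDerivAt_zpow (l i) (P i y) (Or.inl (hroots y hy i))).comp y
        (by simpa [hP] using hlin : HasDerivAt (fun y => P i y) (b i) y)
      exact hz
    have hprod := HasDerivAt.fun_finsetProd (u := Finset.univ) (f := fun i y => P i y ^ l i)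
      (f' := fun i => ((l i : ℝ) * P i y ^ (l i - 1)) * b i) fun i _ => h1 i
    have : φ = fun y => ∏ i : Fin (n+1), P i y ^ l i := funext hφ
    rw [this]
    simpa [smul_eq_mul] using hprod
  have hφne : ∀ y ∈ Set.Ioo u v, φ y ≠ 0 := fun y hy => by
    rw [hφ]
    exact Finset.prod_ne_zero_iff.2 fun i _ => zpow_ne_zero _ (hroots y hy i)
  -- critical points are roots of Q
  have hcrit : ∀ y ∈ Set.Ioo u v, deriv φ y = 0 → Q.eval y = 0 := by
    intro y hy hder
    have hD := (key y hy).deriv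
    rw [hder] at hD
    have hid : (∑ i : Fin (n+1), (∏ j ∈ univ.erase i, P j y ^ l j) *
        (((l i : ℝ) * P i y ^ (l i - 1)) * b i)) * ∏ j, P j y = φ y * Q.eval y := by
      rw [Finset.sum_mul, hφ y, hQeval y, Finset.mul_sum]
      refine Finset.sum_congr rfl fun i _ => ?_
      have hXi := hroots y hy i
      have h1 : P i y ^ (l i - 1) * P i y = P i y ^ (l i) := by
        rw [zpow_sub_one₀ hXi, mul_assoc, inv_mul_cancel₀ hXi, mul_one]
      rw [← Finset.mul_prod_erase _ (fun j => P j y) (Finset.mem_univ i),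
        ← Finset.mul_prod_erase _ (fun j => P j y ^ l j) (Finset.mem_univ i)]
      linear_combination ((∏ j ∈ univ.erase i, P j y ^ l j) *
        (∏ j ∈ univ.erase i, P j y) * (l i : ℝ) * b i) * h1
    rw [← hD, zero_mul] at hid
    rcases mul_eq_zero.1 hid.symm with h | h
    · exact absurd h (hφne y hy)
    · exact h
  -- enumerate S in increasing order
  have hm2 : n + 2 ≤ S.card := hcard
  set s : Fin S.card → ℝ := fun k => S.orderEmbOfFin rfl k with hs
  have hsmem : ∀ k, s k ∈ S := fun k => S.orderEmbOfFin_mem rfl k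
  have hsmono : StrictMono s := (S.orderEmbOfFin rfl).strictMono
  -- Rolle between consecutive points
  have hroll : ∀ k : Fin (n+1), ∃ c ∈ Set.Ioo (s ⟨k, by omega⟩) (s ⟨(k : ℕ) + 1, by omega⟩),
      Q.eval c = 0 := by
    intro k
    set A := s ⟨k, by omega⟩ with hA
    set B := s ⟨(k : ℕ) + 1, by omega⟩ with hB
    have hAB : A < B := hsmono (by simp [Fin.lt_def])
    have hAuv : A ∈ Set.Ioo u v := hS (hsmem _)
    have hBuv : B ∈ Set.Ioo u v := hS (hsmem _)
    have hIcc : Set.Icc A B ⊆ Set.Ioo u v := fun x hx =>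
      ⟨hAuv.1.trans_le hx.1, hx.2.trans_lt hBuv.2⟩
    have hcont : ContinuousOn φ (Set.Icc A B) := fun x hx =>
      ((key x (hIcc hx)).continuousAt).continuousWithinAt
    have heq : φ A = φ B := by rw [hS1 _ (hsmem _), hS1 _ (hsmem _)]
    obtain ⟨c, hc, hd⟩ := exists_deriv_eq_zero hAB hcont heq
    exact ⟨c, hc, hcrit c (hIcc ⟨le_of_lt hc.1, le_of_lt hc.2⟩) hd⟩
  choose c hcIoo hcroot using hroll
  have hcmono : StrictMono c := by
    intro k k' hkk'
    calc c k < s ⟨(k : ℕ) + 1, by omega⟩ := (hcIoo k).2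
      _ ≤ s ⟨(k' : ℕ), by omega⟩ := hsmono.monotone (by simp [Fin.le_def]; omega)
      _ < c k' := (hcIoo k').1
  have hsub : Finset.image c Finset.univ ⊆ Q.roots.toFinset := by
    intro x hx
    obtain ⟨k, _, rfl⟩ := Finset.mem_image.1 hx
    rw [Multiset.mem_toFinset, Polynomial.mem_roots hQne]
    exact hcroot k
  have h1 : n + 1 ≤ (Finset.image c Finset.univ).card := by
    rw [Finset.card_image_of_injective _ hcmono.injective, Finset.card_univ, Fintype.card_fin]
  have h2 : Q.roots.toFinset.card ≤ n :=
    (Multiset.toFinset_card_le _).trans ((Polynomial.card_roots' Q).trans hdeg)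
  have := (h1.trans (Finset.card_le_card hsub)).trans h2
  omega
end

section
/- Suppose a system of n Laurent polynomial equations in n positive real variables has the diagonal form z^{w_i} = P_i(z^{w_{n+1}}) for i = 1,…,n, where w_1,…,w_{n+1} ∈ ℤ^n and the P_i are real affine polynomials. If ∑_{i=1}^{n+1} λ_i w_i = 0 is an integer linear relation, then any positive solution z ∈ ℝ_{>0}^n yields a solution y = z^{w_{n+1}} of the equation ∏_{i=1}^{n+1} P_i(y)^{λ_i} = 1 with P_i(y) > 0 for all i (where P_{n+1}(y) = y). -/
lemma zpow_sum_aux {α : Type*} (s : Finset α) (x : ℝ) (hx : x ≠ 0) (f : α → ℤ) :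
    x ^ (∑ i ∈ s, f i) = ∏ i ∈ s, x ^ f i := by
  classical
  induction s using Finset.induction with
  | empty => simp
  | insert _ _ h ih => rw [Finset.sum_insert h, Finset.prod_insert h, zpow_add₀ hx, ih]

theorem stmt8 (n : ℕ) (w : Fin (n+1) → Fin n → ℤ) (P : Fin (n+1) → ℝ → ℝ)
    (l : Fin (n+1) → ℤ)
    (hPaff : ∀ i : Fin n, ∃ a b : ℝ, ∀ y, P i.castSucc y = a + b * y)
    (hPlast : ∀ y, P (Fin.last n) y = y)
    (hrel : ∀ k, ∑ i, l i * w i k = 0)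
    (z : Fin n → ℝ) (hz : ∀ k, 0 < z k)
    (y : ℝ) (hy : y = ∏ k, z k ^ (w (Fin.last n) k))
    (hsys : ∀ i : Fin n, (∏ k, z k ^ (w i.castSucc k)) = P i.castSucc y) :
    (∀ i, 0 < P i y) ∧ ∏ i, (P i y) ^ (l i) = 1 := by
  have hQ : ∀ i : Fin (n+1), P i y = ∏ k, z k ^ (w i k) := by
    intro i
    induction i using Fin.lastCases with
    | last => rw [hPlast, hy]
    | cast j => exact (hsys j).symm
  have hpos : ∀ i, 0 < P i y := by
    intro i
    rw [hQ i]
    exact Finset.prod_pos fun k _ => zpow_pos (hz k) _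
  refine ⟨hpos, ?_⟩
  calc ∏ i, (P i y) ^ (l i)
      = ∏ i, ∏ k, (z k ^ (w i k)) ^ (l i) := by
        refine Finset.prod_congr rfl fun i _ => ?_
        rw [hQ i, ← Finset.prod_zpow]
    _ = ∏ k, ∏ i, (z k ^ (w i k)) ^ (l i) := Finset.prod_comm
    _ = ∏ k, z k ^ (∑ i, l i * w i k) := by
        refine Finset.prod_congr rfl fun k _ => ?_
        rw [zpow_sum_aux _ _ (hz k).ne']
        refine Finset.prod_congr rfl fun i _ => ?_
        rw [← zpow_mul, mul_comm]
    _ = 1 := by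
        refine Finset.prod_eq_one fun k _ => ?_
        rw [hrel k, zpow_zero]
end

section
/- Let G_t(y) = ∏_{j odd} (1 + t^{α_j} y)^{λ_j} · t^{α_1 λ_1} y^{λ_1} − ∏_{j even} (1 + t^{α_j} y)^{−λ_j} be a difference of two products of powers of affine Viro polynomials, where λ_i > 0 for odd i and λ_i < 0 for even i are integers satisfying the interleaving partial-sum inequalities (so the exponents p_0 < p_1 < ⋯ < p_{n+1} of the lower-hull vertices are strictly increasing). Then for all sufficiently small t > 0, G_t has at least n+1 distinct positive real roots. -/
open Finset

private lemma err_bound (t β : ℝ) (ht : 0 < t) (ht1 : t ≤ 1) :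
    |Real.log (1 + t ^ β) - min β 0 * Real.log t| ≤ 1 := by
  have htp : (0:ℝ) < t ^ β := Real.rpow_pos_of_pos ht β
  rcases le_or_gt 0 β with hβ | hβ
  · rw [min_eq_right hβ, zero_mul, sub_zero]
    have h1 : t ^ β ≤ 1 := Real.rpow_le_one (le_of_lt ht) ht1 hβ
    have hlogpos : 0 ≤ Real.log (1 + t ^ β) := Real.log_nonneg (by linarith)
    have hle : Real.log (1 + t ^ β) ≤ 1 := by
      have := Real.log_le_sub_one_of_pos (show (0:ℝ) < 1 + t ^ β by linarith)
      linarith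
    rw [abs_of_nonneg hlogpos]; linarith
  · rw [min_eq_left (le_of_lt hβ)]
    have htp2 : (0:ℝ) < t ^ (-β) := Real.rpow_pos_of_pos ht (-β)
    have key : Real.log (1 + t ^ β) = β * Real.log t + Real.log (1 + t ^ (-β)) := by
      have hfac : 1 + t ^ β = t ^ β * (1 + t ^ (-β)) := by
        rw [mul_add, mul_one, ← Real.rpow_add ht, add_neg_cancel, Real.rpow_zero]
        ring
      rw [hfac, Real.log_mul (ne_of_gt htp) (by positivity), Real.log_rpow ht]
    rw [key]
    have h1 : t ^ (-β) ≤ 1 := Real.rpow_le_one (le_of_lt ht) ht1 (by linarith)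
    have hlogpos : 0 ≤ Real.log (1 + t ^ (-β)) := Real.log_nonneg (by linarith)
    have hle : Real.log (1 + t ^ (-β)) ≤ 1 := by
      have := Real.log_le_sub_one_of_pos (show (0:ℝ) < 1 + t ^ (-β) by linarith)
      linarith
    rw [add_sub_cancel_left, abs_of_nonneg hlogpos]; linarith

set_option maxHeartbeats 2000000 in
theorem stmt10 (n : ℕ) (l : ℕ → ℤ)
    (hsign : ∀ i, 1 ≤ i → i ≤ n+2 → (Odd i → 0 < l i) ∧ (Even i → l i < 0))
    (p h : ℕ → ℝ)
    (hpodd : ∀ k, p (2*k+1) = ∑ j ∈ Finset.range (k+1), (l (2*j+1) : ℝ))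
    (hpeven : ∀ k, p (2*k) = -∑ j ∈ Finset.range k, (l (2*j+2) : ℝ))
    (hpmono : ∀ i, i ≤ n → p i < p (i+1))
    (h0 : h 0 = 0)
    (hslope : ∀ i j, i < j → j ≤ n →
      (h (i+1) - h i) / (p (i+1) - p i) < (h (j+1) - h j) / (p (j+1) - p j))
    (α : ℕ → ℝ)
    (hα1 : α 1 = h 1 / p 1)
    (hα2 : α 2 = h 2 / p 2)
    (hαi : ∀ i, 3 ≤ i → i ≤ n+1 → α i = (h i - h (i-2)) / (p i - p (i-2)))
    (G : ℝ → ℝ → ℝ)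
    (hG : ∀ t y : ℝ, G t y =
      t ^ (α 1 * (l 1 : ℝ)) * y ^ (l 1) *
        ∏ j ∈ (Finset.Icc 2 (n+1)).filter (fun j => Odd j), (1 + t ^ (α j) * y) ^ (l j)
      - ∏ j ∈ (Finset.Icc 2 (n+1)).filter (fun j => Even j), (1 + t ^ (α j) * y) ^ (-(l j))) :
    ∃ t0 : ℝ, 0 < t0 ∧ ∀ t : ℝ, 0 < t → t < t0 →
      ∃ S : Finset ℝ, S.card = n + 1 ∧ ∀ y ∈ S, 0 < y ∧ G t y = 0 := by
  -- basic facts about p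
  have hp0 : p 0 = 0 := by simpa using hpeven 0
  have hp1 : p 1 = (l 1 : ℝ) := by simpa using hpodd 0
  have hpd : ∀ i j, i < j → j ≤ n+1 → p i < p j := by
    intro i j hij hj
    induction j with
    | zero => omega
    | succ j ih =>
      rcases Nat.lt_succ_iff_lt_or_eq.mp hij with hlt | heq
      · exact lt_trans (ih hlt (by omega)) (hpmono j (by omega))
      · rw [heq]; exact hpmono j (by omega)
  have hl1pos : (0:ℝ) < (l 1 : ℝ) := by
    exact_mod_cast (hsign 1 le_rfl (by omega)).1 ⟨0, by ring⟩
  -- l j in terms of p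
  have hl2 : ∀ j, 2 ≤ j → (l j : ℝ) = (-1)^(j+1) * (p j - p (j-2)) := by
    intro j hj
    rcases Nat.even_or_odd j with ⟨m, hm⟩ | ⟨m, hm⟩
    · -- j = 2m, m ≥ 1
      subst hm
      have hm1 : 1 ≤ m := by omega
      rw [show m + m = 2*m by omega]
      rw [show 2*m - 2 = 2*(m-1) by omega]
      have e2 := hpeven (m-1)
      have hstep : ∑ j ∈ Finset.range m, (l (2*j+2) : ℝ)
          = (∑ j ∈ Finset.range (m-1), (l (2*j+2) : ℝ)) + (l (2*(m-1)+2) : ℝ) := by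
        conv_lhs => rw [show m = (m-1)+1 by omega]
        rw [Finset.sum_range_succ]
      rw [hpeven m, e2, hstep, show 2*(m-1)+2 = 2*m by omega]
      have hneg : ((-1:ℝ))^(2*m+1) = -1 := by
        rw [pow_succ, pow_mul]; norm_num
      rw [hneg]; ring
    · -- j = 2m+1, m ≥ 1
      subst hm
      have hm1 : 1 ≤ m := by omega
      rw [show 2*m+1 - 2 = 2*(m-1)+1 by omega]
      have e2 := hpodd (m-1)
      rw [show m-1+1 = m by omega] at e2
      rw [hpodd m, e2, Finset.sum_range_succ]
      have hneg : ((-1:ℝ))^(2*m+1+1) = 1 := by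
        rw [show 2*m+1+1 = 2*(m+1) by ring, pow_mul]; norm_num
      rw [hneg]; ring
  -- α j as chord: product identity
  have hαprod : ∀ j, 2 ≤ j → j ≤ n+1 → α j * (p j - p (j-2)) = h j - h (j-2) := by
    intro j h2 hn
    have hd : p (j-2) < p j := hpd (j-2) j (by omega) hn
    have hd' : p j - p (j-2) ≠ 0 := by linarith
    rcases Nat.lt_or_ge j 3 with h3 | h3
    · have : j = 2 := by omega
      subst this
      simp only [show (2:ℕ) - 2 = 0 from rfl, hp0, h0, sub_zero] at *
      rw [hα2]
      field_simp
    · rw [hαi j h3 hn]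
      field_simp
  have hlα : ∀ j, 2 ≤ j → j ≤ n+1 → (l j : ℝ) * α j = (-1)^(j+1) * (h j - h (j-2)) := by
    intro j h2 hn
    linear_combination ((-1:ℝ)^(j+1)) * hαprod j h2 hn + α j * hl2 j h2
  -- secant bounds for α j
  have hm_lt : ∀ j, 2 ≤ j → j ≤ n+1 →
      (h (j-1) - h (j-2)) / (p (j-1) - p (j-2)) < α j ∧
      α j < (h j - h (j-1)) / (p j - p (j-1)) := by
    intro j h2 hn
    have hd1 : (0:ℝ) < p (j-1) - p (j-2) := by
      have := hpd (j-2) (j-1) (by omega) (by omega); linarith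
    have hd2 : (0:ℝ) < p j - p (j-1) := by
      have := hpd (j-1) j (by omega) hn; linarith
    have e1 : j - 2 + 1 = j - 1 := by omega
    have e2 : j - 1 + 1 = j := by omega
    have hs := hslope (j-2) (j-1) (by omega) (by omega)
    rw [e1, e2] at hs
    set M1 := (h (j-1) - h (j-2)) / (p (j-1) - p (j-2)) with hM1
    set M2 := (h j - h (j-1)) / (p j - p (j-1)) with hM2
    have hh1 : h (j-1) - h (j-2) = M1 * (p (j-1) - p (j-2)) := by
      rw [hM1]; field_simp
    have hh2 : h j - h (j-1) = M2 * (p j - p (j-1)) := by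
      rw [hM2]; field_simp
    have hid : α j * ((p (j-1) - p (j-2)) + (p j - p (j-1)))
        = M1 * (p (j-1) - p (j-2)) + M2 * (p j - p (j-1)) := by
      have := hαprod j h2 hn
      have hpe : p j - p (j-2) = (p (j-1) - p (j-2)) + (p j - p (j-1)) := by ring
      rw [hpe] at this
      rw [this, ← hh1, ← hh2]; ring
    constructor
    · nlinarith [mul_pos hd1 hd2]
    · nlinarith [mul_pos hd1 hd2]
  -- α strictly increasing on [1, n+1]
  have hαstep : ∀ j, 1 ≤ j → j ≤ n → α j < α (j+1) := by
    intro j h1 hn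
    rcases Nat.lt_or_ge j 2 with h2 | h2
    · have : j = 1 := by omega
      subst this
      have := (hm_lt 2 le_rfl (by omega)).1
      simp only [show (2:ℕ)-1 = 1 from rfl, show (2:ℕ)-2 = 0 from rfl, hp0, h0, sub_zero] at this
      rw [hα1]; exact this
    · have hu := (hm_lt j h2 (by omega)).2
      have hl' := (hm_lt (j+1) (by omega) (by omega)).1
      have e1 : j + 1 - 1 = j := by omega
      have e2 : j + 1 - 2 = j - 1 := by omega
      rw [e1, e2] at hl'
      linarith
  have hαlt : ∀ i j, 1 ≤ i → i < j → j ≤ n+1 → α i < α j := by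
    intro i j hi hij hj
    induction j with
    | zero => omega
    | succ j ih =>
      rcases Nat.lt_succ_iff_lt_or_eq.mp hij with hlt | heq
      · exact lt_trans (ih hlt (by omega)) (hαstep j (by omega) (by omega))
      · rw [heq]; exact hαstep j (by omega) (by omega)
  -- the piecewise-linear tropical function Φ
  set Φ : ℝ → ℝ := fun cc => α 1 * (l 1:ℝ) - cc * (l 1:ℝ)
      + ∑ j ∈ Finset.Icc 2 (n+1), (l j:ℝ) * min (α j - cc) 0 with hΦdef
  -- partial sums: heights and widths
  have hSA : ∀ k, 1 ≤ k → k ≤ n+1 →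
      (α 1 * (l 1:ℝ) + ∑ j ∈ Finset.Icc 2 k, (l j:ℝ) * α j = (-1)^(k+1) * (h k - h (k-1)))
      ∧ ((l 1:ℝ) + ∑ j ∈ Finset.Icc 2 k, (l j:ℝ) = (-1)^(k+1) * (p k - p (k-1))) := by
    intro k hk1 hk2
    induction k with
    | zero => omega
    | succ k ih =>
      rcases Nat.lt_or_ge k 1 with hk0 | hk0
      · have : k = 0 := by omega
        subst this
        have hIcc : Finset.Icc 2 1 = (∅ : Finset ℕ) := by decide
        have hp1ne : p 1 ≠ 0 := by
          have := hpd 0 1 (by omega) (by omega); rw [hp0] at this; linarith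
        constructor
        · rw [hIcc]; simp only [Finset.sum_empty, add_zero]
          rw [hα1]
          rw [show (0:ℕ)+1-1 = 0 from rfl, h0]
          rw [← hp1]
          field_simp
          norm_num
        · rw [hIcc]; simp only [Finset.sum_empty, add_zero]
          rw [show (0:ℕ)+1-1 = 0 from rfl, hp0, hp1]
          ring
      · obtain ⟨ihA, ihS⟩ := ih hk0 (by omega)
        have hsplitA : ∑ j ∈ Finset.Icc 2 (k+1), (l j:ℝ) * α j
            = (∑ j ∈ Finset.Icc 2 k, (l j:ℝ) * α j) + (l (k+1):ℝ) * α (k+1) :=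
          Finset.sum_Icc_succ_top (by omega) _
        have hsplitS : ∑ j ∈ Finset.Icc 2 (k+1), (l j:ℝ)
            = (∑ j ∈ Finset.Icc 2 k, (l j:ℝ)) + (l (k+1):ℝ) :=
          Finset.sum_Icc_succ_top (by omega) _
        have hlk := hlα (k+1) (by omega) hk2
        have hlk2 := hl2 (k+1) (by omega)
        have eidx : k + 1 - 2 = k - 1 := by omega
        rw [eidx] at hlk hlk2
        have ek : k + 1 - 1 = k := by omega
        have ekk : k - 1 + 1 = k := by omega
        have hpow : ((-1:ℝ))^(k+1+1) = -((-1:ℝ))^(k+1) := by rw [pow_succ]; ring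
        constructor
        · rw [hsplitA, ek]
          rw [show α 1 * (l 1:ℝ) + ((∑ j ∈ Finset.Icc 2 k, (l j:ℝ) * α j) + (l (k+1):ℝ) * α (k+1))
              = (α 1 * (l 1:ℝ) + ∑ j ∈ Finset.Icc 2 k, (l j:ℝ) * α j) + (l (k+1):ℝ) * α (k+1) by ring]
          rw [ihA, hlk, hpow]
          ring
        · rw [hsplitS, ek]
          rw [show (l 1:ℝ) + ((∑ j ∈ Finset.Icc 2 k, (l j:ℝ)) + (l (k+1):ℝ))
              = ((l 1:ℝ) + ∑ j ∈ Finset.Icc 2 k, (l j:ℝ)) + (l (k+1):ℝ) by ring]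
          rw [ihS, hlk2, hpow]
          ring
  -- evaluation of Φ between consecutive α's
  have hΦeval : ∀ (k : ℕ) (cc : ℝ), 1 ≤ k → k ≤ n+1 →
      (∀ j, 2 ≤ j → j ≤ k → α j < cc) → (∀ j, k+1 ≤ j → j ≤ n+1 → cc ≤ α j) →
      Φ cc = (-1)^(k+1) * ((h k - h (k-1)) - cc * (p k - p (k-1))) := by
    intro k cc hk1 hk2 hlo hhi
    have hmin : ∀ j ∈ Finset.Icc 2 (n+1), (l j:ℝ) * min (α j - cc) 0
        = if j ≤ k then (l j:ℝ) * (α j - cc) else 0 := by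
      intro j hj
      rw [Finset.mem_Icc] at hj
      by_cases hjk : j ≤ k
      · rw [if_pos hjk, min_eq_left (by linarith [hlo j hj.1 hjk])]
      · rw [if_neg hjk, min_eq_right (by linarith [hhi j (by omega) hj.2]), mul_zero]
    have hfilter : (Finset.Icc 2 (n+1)).filter (fun j => j ≤ k) = Finset.Icc 2 k := by
      ext a; simp only [Finset.mem_filter, Finset.mem_Icc]; omega
    have hsum : ∑ j ∈ Finset.Icc 2 (n+1), (l j:ℝ) * min (α j - cc) 0
        = ∑ j ∈ Finset.Icc 2 k, (l j:ℝ) * (α j - cc) := by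
      rw [Finset.sum_congr rfl hmin, ← Finset.sum_filter, hfilter]
    have hexp : ∑ j ∈ Finset.Icc 2 k, (l j:ℝ) * (α j - cc)
        = (∑ j ∈ Finset.Icc 2 k, (l j:ℝ) * α j) - cc * ∑ j ∈ Finset.Icc 2 k, (l j:ℝ) := by
      rw [Finset.mul_sum, ← Finset.sum_sub_distrib]
      exact Finset.sum_congr rfl fun j _ => by ring
    obtain ⟨hA, hS⟩ := hSA k hk1 hk2
    simp only [hΦdef]
    rw [hsum, hexp]
    have : α 1 * (l 1:ℝ) - cc * (l 1:ℝ)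
        + ((∑ j ∈ Finset.Icc 2 k, (l j:ℝ) * α j) - cc * ∑ j ∈ Finset.Icc 2 k, (l j:ℝ))
        = (α 1 * (l 1:ℝ) + ∑ j ∈ Finset.Icc 2 k, (l j:ℝ) * α j)
          - cc * ((l 1:ℝ) + ∑ j ∈ Finset.Icc 2 k, (l j:ℝ)) := by ring
    rw [this, hA, hS]
    ring
  -- test points
  set cp : ℕ → ℝ := fun k =>
    if k = 0 then α 1 - 1
    else if k ≤ n then α (k+1)
    else max (α (n+1)) ((h (n+1) - h n) / (p (n+1) - p n)) + 1 with hcpdef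
  -- sign of Φ at test points
  have hqpos : ∀ k, k ≤ n+1 → 0 < (-1:ℝ)^k * Φ (cp k) := by
    intro k hk
    rcases Nat.eq_zero_or_pos k with hk0 | hk1
    · subst hk0
      have hc0 : cp 0 = α 1 - 1 := by simp [hcpdef]
      have hminz : ∀ j ∈ Finset.Icc 2 (n+1), (l j:ℝ) * min (α j - cp 0) 0 = 0 := by
        intro j hj
        rw [Finset.mem_Icc] at hj
        have : α 1 < α j := hαlt 1 j le_rfl (by omega) hj.2
        rw [min_eq_right (by rw [hc0]; linarith), mul_zero]
      have : Φ (cp 0) = (l 1 : ℝ) := by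
        simp only [hΦdef]
        rw [Finset.sum_eq_zero hminz, hc0]
        ring
      rw [this]
      simpa using hl1pos
    · -- 1 ≤ k ≤ n+1
      have hdk : (0:ℝ) < p k - p (k-1) := by
        have := hpd (k-1) k (by omega) hk; linarith
      have hcpk : ∀ j, 2 ≤ j → j ≤ k → α j < cp k := by
        intro j h2 hjk
        rcases Nat.lt_or_ge n k with hnk | hnk
        · -- k = n+1
          have hkn : k = n+1 := by omega
          have h1 : α j ≤ α (n+1) := by
            rcases Nat.lt_or_ge j (n+1) with hj | hj
            · exact le_of_lt (hαlt j (n+1) (by omega) hj le_rfl)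
            · have : j = n+1 := by omega
              rw [this]
          have h2' : cp k = max (α (n+1)) ((h (n+1) - h n) / (p (n+1) - p n)) + 1 := by
            simp only [hcpdef]
            rw [if_neg (by omega), if_neg (by omega)]
          rw [h2']
          have := le_max_left (α (n+1)) ((h (n+1) - h n) / (p (n+1) - p n))
          linarith
        · -- k ≤ n
          have h2' : cp k = α (k+1) := by
            simp only [hcpdef]
            rw [if_neg (by omega), if_pos hnk]
          rw [h2']
          exact hαlt j (k+1) (by omega) (by omega) (by omega)
      have hcpk2 : ∀ j, k+1 ≤ j → j ≤ n+1 → cp k ≤ α j := by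
        intro j hj1 hj2
        have hkn : k ≤ n := by omega
        have h2' : cp k = α (k+1) := by
          simp only [hcpdef]
          rw [if_neg (by omega), if_pos hkn]
        rw [h2']
        rcases Nat.lt_or_ge (k+1) j with hlt | hge
        · exact le_of_lt (hαlt (k+1) j (by omega) hlt hj2)
        · have : j = k+1 := by omega
          rw [this]
      have hmmlt : (h k - h (k-1)) / (p k - p (k-1)) < cp k := by
        rcases Nat.lt_or_ge n k with hnk | hnk
        · have hkn : k = n+1 := by omega
          have h2' : cp k = max (α (n+1)) ((h (n+1) - h n) / (p (n+1) - p n)) + 1 := by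
            simp only [hcpdef]
            rw [if_neg (by omega), if_neg (by omega)]
          rw [h2', hkn]
          have e : n + 1 - 1 = n := by omega
          rw [e]
          have := le_max_right (α (n+1)) ((h (n+1) - h n) / (p (n+1) - p n))
          linarith
        · have h2' : cp k = α (k+1) := by
            simp only [hcpdef]
            rw [if_neg (by omega), if_pos hnk]
          rw [h2']
          have := (hm_lt (k+1) (by omega) (by omega)).1
          have e1 : k + 1 - 1 = k := by omega
          have e2 : k + 1 - 2 = k - 1 := by omega
          rw [e1, e2] at this
          exact this
      have hΦk := hΦeval k (cp k) hk1 hk hcpk hcpk2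
      rw [hΦk]
      have hneg : (h k - h (k-1)) - cp k * (p k - p (k-1)) < 0 := by
        rw [div_lt_iff₀ hdk] at hmmlt
        linarith
      have hsq : ((-1:ℝ))^k * ((-1:ℝ))^(k+1) = -1 := by
        rw [← pow_add]
        have : Odd (k + (k+1)) := ⟨k, by ring⟩
        rw [this.neg_one_pow]
      calc (0:ℝ) < (-1) * ((h k - h (k-1)) - cp k * (p k - p (k-1))) := by linarith
        _ = (-1:ℝ)^k * ((-1:ℝ)^(k+1) * ((h k - h (k-1)) - cp k * (p k - p (k-1)))) := by
            rw [← mul_assoc, hsq]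
  -- test points are strictly increasing
  have hcmono : ∀ k, k ≤ n → cp k < cp (k+1) := by
    intro k hk
    rcases Nat.eq_zero_or_pos k with hk0 | hk1
    · subst hk0
      have hc0 : cp 0 = α 1 - 1 := by simp [hcpdef]
      rcases Nat.eq_zero_or_pos n with hn0 | hn1
      · have hc1 : cp 1 = max (α (n+1)) ((h (n+1) - h n) / (p (n+1) - p n)) + 1 := by
          simp only [hcpdef]
          rw [if_neg (by omega), if_neg (by omega)]
        rw [hc0, hc1, hn0]
        have := le_max_left (α (0+1)) ((h (0+1) - h 0) / (p (0+1) - p 0))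
        simp only [Nat.zero_add] at *
        linarith
      · have hc1 : cp 1 = α 2 := by
          simp only [hcpdef]
          rw [if_neg (by omega), if_pos (by omega)]
        rw [hc0, hc1]
        have := hαlt 1 2 le_rfl (by omega) (by omega)
        linarith
    · have hck : cp k = α (k+1) := by
        simp only [hcpdef]
        rw [if_neg (by omega), if_pos hk]
      rcases Nat.lt_or_ge (k+1) (n+1) with hlt | hge
      · have hck1 : cp (k+1) = α (k+2) := by
          simp only [hcpdef]
          rw [if_neg (by omega), if_pos (by omega)]
        rw [hck, hck1]
        exact hαlt (k+1) (k+2) (by omega) (by omega) (by omega)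
      · have hkn : k = n := by omega
        have hck1 : cp (k+1) = max (α (n+1)) ((h (n+1) - h n) / (p (n+1) - p n)) + 1 := by
          simp only [hcpdef]
          rw [if_neg (by omega), if_neg (by omega)]
        rw [hck, hck1, hkn]
        have := le_max_left (α (n+1)) ((h (n+1) - h n) / (p (n+1) - p n))
        linarith
  have hcchain : ∀ a b, a < b → b ≤ n+1 → cp a < cp b := by
    intro a b hab hb
    induction b with
    | zero => omega
    | succ b ih =>
      rcases Nat.lt_succ_iff_lt_or_eq.mp hab with hlt | heq
      · exact lt_trans (ih hlt (by omega)) (hcmono b (by omega))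
      · rw [heq]; exact hcmono b (by omega) 
  -- the log-linearized function F
  set F : ℝ → ℝ → ℝ := fun t y => α 1 * (l 1:ℝ) * Real.log t + (l 1:ℝ) * Real.log y
      + ∑ j ∈ Finset.Icc 2 (n+1), (l j:ℝ) * Real.log (1 + t ^ (α j) * y) with hFdef
  set C0 : ℝ := ∑ j ∈ Finset.Icc 2 (n+1), |(l j:ℝ)| with hC0def
  have hC0nonneg : 0 ≤ C0 := Finset.sum_nonneg fun j _ => abs_nonneg _
  -- F at scale t^(-cc) is close to log t * Φ cc
  have hFΦ : ∀ (t cc : ℝ), 0 < t → t ≤ 1 →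
      |F t (t ^ (-cc)) - Real.log t * Φ cc| ≤ C0 := by
    intro t cc ht ht1
    have hlogy : Real.log (t ^ (-cc)) = -cc * Real.log t := Real.log_rpow ht (-cc)
    have harg : ∀ j : ℕ, t ^ (α j) * t ^ (-cc) = t ^ (α j - cc) := by
      intro j
      rw [← Real.rpow_add ht]
      ring_nf
    have hkey : F t (t ^ (-cc)) - Real.log t * Φ cc
        = ∑ j ∈ Finset.Icc 2 (n+1),
            (l j:ℝ) * (Real.log (1 + t ^ (α j - cc)) - min (α j - cc) 0 * Real.log t) := by
      simp only [hFdef, hΦdef]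
      rw [hlogy]
      have hsc : ∀ j ∈ Finset.Icc 2 (n+1), (l j:ℝ) * Real.log (1 + t ^ (α j) * t ^ (-cc))
          = (l j:ℝ) * Real.log (1 + t ^ (α j - cc)) := by
        intro j _; rw [harg j]
      rw [Finset.sum_congr rfl hsc]
      have expand : ∑ j ∈ Finset.Icc 2 (n+1),
          (l j:ℝ) * (Real.log (1 + t ^ (α j - cc)) - min (α j - cc) 0 * Real.log t)
          = (∑ j ∈ Finset.Icc 2 (n+1), (l j:ℝ) * Real.log (1 + t ^ (α j - cc)))
            - (∑ j ∈ Finset.Icc 2 (n+1), (l j:ℝ) * min (α j - cc) 0) * Real.log t := by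
        rw [Finset.sum_mul, ← Finset.sum_sub_distrib]
        exact Finset.sum_congr rfl fun j _ => by ring
      rw [expand]
      ring
    rw [hkey]
    simp only [hC0def]
    calc |∑ j ∈ Finset.Icc 2 (n+1),
            (l j:ℝ) * (Real.log (1 + t ^ (α j - cc)) - min (α j - cc) 0 * Real.log t)|
        ≤ ∑ j ∈ Finset.Icc 2 (n+1),
            |(l j:ℝ) * (Real.log (1 + t ^ (α j - cc)) - min (α j - cc) 0 * Real.log t)| :=
          Finset.abs_sum_le_sum_abs _ _
      _ ≤ ∑ j ∈ Finset.Icc 2 (n+1), |(l j:ℝ)| := by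
          apply Finset.sum_le_sum
          intro j _
          rw [abs_mul]
          calc |(l j:ℝ)| * |Real.log (1 + t ^ (α j - cc)) - min (α j - cc) 0 * Real.log t|
              ≤ |(l j:ℝ)| * 1 := by
                apply mul_le_mul_of_nonneg_left (err_bound t (α j - cc) ht ht1) (abs_nonneg _)
            _ = |(l j:ℝ)| := mul_one _
  -- G vanishes iff F vanishes (for positive t, y)
  have hGF : ∀ t y : ℝ, 0 < t → 0 < y → (G t y = 0 ↔ F t y = 0) := by
    intro t y ht hy
    have hfac : ∀ j : ℕ, (0:ℝ) < 1 + t ^ (α j) * y := by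
      intro j
      have := Real.rpow_pos_of_pos ht (α j)
      nlinarith
    set A : ℝ := t ^ (α 1 * (l 1 : ℝ)) * y ^ (l 1) *
        ∏ j ∈ (Finset.Icc 2 (n+1)).filter (fun j => Odd j), (1 + t ^ (α j) * y) ^ (l j) with hAdef
    set B : ℝ := ∏ j ∈ (Finset.Icc 2 (n+1)).filter (fun j => Even j),
        (1 + t ^ (α j) * y) ^ (-(l j)) with hBdef
    have hApos : 0 < A := by
      rw [hAdef]
      apply mul_pos (mul_pos (Real.rpow_pos_of_pos ht _) (zpow_pos hy _))
      exact Finset.prod_pos fun j _ => zpow_pos (hfac j) _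
    have hBpos : 0 < B := by
      rw [hBdef]
      exact Finset.prod_pos fun j _ => zpow_pos (hfac j) _
    have hlogA : Real.log A = α 1 * (l 1:ℝ) * Real.log t + (l 1:ℝ) * Real.log y
        + ∑ j ∈ (Finset.Icc 2 (n+1)).filter (fun j => Odd j),
            (l j:ℝ) * Real.log (1 + t ^ (α j) * y) := by
      rw [hAdef, Real.log_mul (by positivity) (by
          apply ne_of_gt
          exact Finset.prod_pos fun j _ => zpow_pos (hfac j) _),
        Real.log_mul (by positivity) (by positivity),
        Real.log_rpow ht, Real.log_zpow,
        Real.log_prod (fun j _ => ne_of_gt (zpow_pos (hfac j) _))]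
      have : ∀ j ∈ (Finset.Icc 2 (n+1)).filter (fun j => Odd j),
          Real.log ((1 + t ^ (α j) * y) ^ (l j)) = (l j:ℝ) * Real.log (1 + t ^ (α j) * y) := by
        intro j _; rw [Real.log_zpow]
      rw [Finset.sum_congr rfl this]
    have hlogB : Real.log B = -∑ j ∈ (Finset.Icc 2 (n+1)).filter (fun j => Even j),
        (l j:ℝ) * Real.log (1 + t ^ (α j) * y) := by
      rw [hBdef, Real.log_prod (fun j _ => ne_of_gt (zpow_pos (hfac j) _))]
      rw [← Finset.sum_neg_distrib]
      apply Finset.sum_congr rfl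
      intro j _
      rw [Real.log_zpow]
      push_cast
      ring
    have hFsplit : F t y = Real.log A - Real.log B := by
      simp only [hFdef]
      rw [hlogA, hlogB]
      have hfe : (Finset.Icc 2 (n+1)).filter (fun j => ¬ Odd j)
          = (Finset.Icc 2 (n+1)).filter (fun j => Even j) := by
        apply Finset.filter_congr
        intro j _
        simp [Nat.not_odd_iff_even]
      have := Finset.sum_filter_add_sum_filter_not (Finset.Icc 2 (n+1)) (fun j => Odd j)
        (fun j => (l j:ℝ) * Real.log (1 + t ^ (α j) * y))
      rw [hfe] at this
      rw [← this]
      ring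
    rw [hG t y, ← hAdef, ← hBdef]
    constructor
    · intro hz
      have hAB : A = B := by linarith
      rw [hFsplit, hAB]
      ring
    · intro hz
      have : Real.log A = Real.log B := by rw [hFsplit] at hz; linarith
      have hAB : A = B := by
        have := Real.log_injOn_pos (Set.mem_Ioi.mpr hApos) (Set.mem_Ioi.mpr hBpos) this
        exact this
      linarith
  -- continuity of F t on positives
  have hFcont : ∀ t : ℝ, 0 < t → ContinuousOn (F t) {y : ℝ | 0 < y} := by
    intro t ht
    simp only [hFdef]
    apply ContinuousOn.add
    apply ContinuousOn.add
    · exact continuousOn_const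
    · exact continuousOn_const.mul (ContinuousOn.log continuousOn_id
        (fun x hx => ne_of_gt hx))
    · apply continuousOn_finset_sum
      intro j _
      apply continuousOn_const.mul
      apply ContinuousOn.log
      · exact (continuousOn_const.add (continuousOn_const.mul continuousOn_id))
      · intro x hx
        have := Real.rpow_pos_of_pos ht (α j)
        have hx' : (0:ℝ) < x := hx
        nlinarith
  -- choose t0
  have hne : (Finset.range (n+2)).Nonempty := ⟨0, by simp⟩
  set q : ℝ := (Finset.range (n+2)).inf' hne (fun k => (-1:ℝ)^k * Φ (cp k)) with hqdef
  have hq : 0 < q := by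
    simp only [hqdef]
    rw [Finset.lt_inf'_iff]
    intro k hk
    rw [Finset.mem_range] at hk
    exact hqpos k (by omega)
  refine ⟨Real.exp (-(C0 + 1)/q), Real.exp_pos _, ?_⟩
  intro t ht htlt
  have ht1 : t < 1 := by
    apply lt_of_lt_of_le htlt
    rw [Real.exp_le_one_iff]
    apply div_nonpos_of_nonpos_of_nonneg <;> [linarith; linarith]
  have hlogt : Real.log t < -(C0 + 1)/q := by
    calc Real.log t < Real.log (Real.exp (-(C0 + 1)/q)) := Real.log_lt_log ht htlt
      _ = -(C0 + 1)/q := Real.log_exp _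
  rw [neg_div] at hlogt
  have hlogtneg : Real.log t < 0 := by
    have h' : 0 < (C0+1)/q := div_pos (by linarith) hq
    linarith
  -- sign of F at the test points
  have hFsign : ∀ k, k ≤ n+1 → 0 < (-1:ℝ)^(k+1) * F t (t ^ (-(cp k))) := by
    intro k hk
    have hqk : q ≤ (-1:ℝ)^k * Φ (cp k) :=
      Finset.inf'_le _ (Finset.mem_range.mpr (by omega))
    have hE := hFΦ t (cp k) ht (le_of_lt ht1)
    rw [abs_le] at hE
    set E : ℝ := F t (t ^ (-(cp k))) - Real.log t * Φ (cp k) with hEdef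
    have hFk : F t (t ^ (-(cp k))) = Real.log t * Φ (cp k) + E := by rw [hEdef]; ring
    set qk : ℝ := (-1:ℝ)^k * Φ (cp k) with hqkdef
    have hqk0 : 0 < qk := hqpos k hk
    have hsq1 : ((-1:ℝ))^k * ((-1:ℝ))^k = 1 := by rw [← mul_pow]; norm_num
    have hΦk : Φ (cp k) = (-1:ℝ)^k * qk := by
      rw [hqkdef, ← mul_assoc, hsq1, one_mul]
    have hmain : (-1:ℝ)^(k+1) * (Real.log t * Φ (cp k)) = -Real.log t * qk := by
      have step : (-1:ℝ)^(k+1) * (Real.log t * Φ (cp k))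
          = ((-1:ℝ)^k * (-1:ℝ)^k) * (-Real.log t * qk) := by
        rw [hΦk, pow_succ]; ring
      rw [step, hsq1, one_mul]
    have hLq : -Real.log t * qk > C0 + 1 := by
      have hL : (C0 + 1)/q < -Real.log t := by linarith
      have h1 : (C0 + 1)/q * q = C0 + 1 := div_mul_cancel₀ _ (ne_of_gt hq)
      nlinarith
    have hEabs : (-1:ℝ)^(k+1) * E ≥ -C0 := by
      rcases Nat.even_or_odd (k+1) with he | ho
      · rw [he.neg_one_pow, one_mul]; linarith [hE.1]
      · rw [ho.neg_one_pow]; linarith [hE.2]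
    rw [hFk, mul_add, hmain]
    linarith
  -- scales
  set yy : ℕ → ℝ := fun k => t ^ (-(cp k)) with hyydef
  have hyypos : ∀ k, 0 < yy k := fun k => Real.rpow_pos_of_pos ht _
  have hyymono : ∀ a b, a < b → b ≤ n+1 → yy a < yy b := by
    intro a b hab hb
    simp only [hyydef]
    exact Real.rpow_lt_rpow_of_exponent_gt ht ht1 (by linarith [hcchain a b hab hb])
  -- roots via IVT
  have hroot : ∀ k, k ≤ n → ∃ z, z ∈ Set.Ioo (yy k) (yy (k+1)) ∧ F t z = 0 := by
    intro k hk
    have hyk : yy k < yy (k+1) := hyymono k (k+1) (by omega) (by omega)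
    have hcont : ContinuousOn (F t) (Set.Icc (yy k) (yy (k+1))) := by
      apply (hFcont t ht).mono
      intro x hx
      have := hx.1
      have := hyypos k
      simp only [Set.mem_setOf_eq]
      linarith
    have hsk := hFsign k (by omega)
    have hsk1 := hFsign (k+1) (by omega)
    rcases Nat.even_or_odd k with he | ho
    · -- F (yy k) < 0 < F (yy (k+1))
      have h1 : F t (yy k) < 0 := by
        have hodd : Odd (k+1) := he.add_one
        rw [hodd.neg_one_pow] at hsk
        simp only [hyydef]
        linarith
      have h2 : 0 < F t (yy (k+1)) := by
        have heven : Even (k+1+1) := by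
          rcases he with ⟨m, hm⟩; exact ⟨m+1, by omega⟩
        rw [heven.neg_one_pow, one_mul] at hsk1
        simp only [hyydef]
        linarith
      have := intermediate_value_Ioo (le_of_lt hyk) hcont
      have h0mem : (0:ℝ) ∈ Set.Ioo (F t (yy k)) (F t (yy (k+1))) := ⟨h1, h2⟩
      obtain ⟨z, hz1, hz2⟩ := this h0mem
      exact ⟨z, hz1, hz2⟩
    · have h1 : 0 < F t (yy k) := by
        have heven : Even (k+1) := ho.add_one
        rw [heven.neg_one_pow, one_mul] at hsk
        simp only [hyydef]
        linarith
      have h2 : F t (yy (k+1)) < 0 := by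
        have hodd : Odd (k+1+1) := by
          rcases ho with ⟨m, hm⟩; exact ⟨m+1, by omega⟩
        rw [hodd.neg_one_pow] at hsk1
        simp only [hyydef]
        linarith
      have := intermediate_value_Ioo' (le_of_lt hyk) hcont
      have h0mem : (0:ℝ) ∈ Set.Ioo (F t (yy (k+1))) (F t (yy k)) := ⟨h2, h1⟩
      obtain ⟨z, hz1, hz2⟩ := this h0mem
      exact ⟨z, hz1, hz2⟩
  have hroot' : ∀ k, ∃ z, k ≤ n → z ∈ Set.Ioo (yy k) (yy (k+1)) ∧ F t z = 0 := by
    intro k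
    by_cases hk : k ≤ n
    · obtain ⟨z, hz⟩ := hroot k hk
      exact ⟨z, fun _ => hz⟩
    · exact ⟨0, fun hh => absurd hh hk⟩
  choose z hz using hroot'
  have hzmono : ∀ i j, i < j → j ≤ n → z i < z j := by
    intro i j hij hj
    have hi := (hz i (by omega)).1
    have hjj := (hz j hj).1
    have h1 : z i < yy (i+1) := hi.2
    have h2 : yy j < z j := hjj.1
    have h3 : yy (i+1) ≤ yy j := by
      rcases Nat.lt_or_ge (i+1) j with hlt | hge
      · exact le_of_lt (hyymono (i+1) j hlt (by omega))
      · have : i + 1 = j := by omega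
        rw [this]
    linarith
  refine ⟨(Finset.range (n+1)).image z, ?_, ?_⟩
  · rw [Finset.card_image_of_injOn, Finset.card_range]
    intro i hi j hj hij
    rw [Finset.coe_range, Set.mem_Iio] at hi hj
    by_contra hne'
    rcases Nat.lt_or_ge i j with hlt | hge
    · exact absurd hij (ne_of_lt (hzmono i j hlt (by omega)))
    · have hlt : j < i := by omega
      exact absurd hij.symm (ne_of_lt (hzmono j i hlt (by omega)))
  · intro y hy
    rw [Finset.mem_image] at hy
    obtain ⟨k, hk, hky⟩ := hy
    rw [Finset.mem_range] at hk
    have hzk := hz k (by omega)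
    have hzpos : 0 < z k := lt_trans (hyypos k) hzk.1.1
    subst hky
    exact ⟨hzpos, (hGF t (z k) ht hzpos).mpr hzk.2⟩
end

section
/- Let W = {w_1, …, w_{n+2}} ⊂ ℝ^n be the support of a generalized polynomial system with real exponents having N non-degenerate positive solutions. Then for any ε > 0 there exist rational points w̃_i ∈ ℚ^n with |w̃_i − w_i| < ε such that the system with the same coefficients and exponents w̃_i has at least N non-degenerate positive solutions. -/
noncomputable def sysMap (n m : ℕ) (c : Fin n → Fin m → ℝ) (w : Fin m → Fin n → ℝ)
    (z : Fin n → ℝ) : Fin n → ℝ :=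
  fun j => ∑ i, c j i * ∏ k, (z k) ^ (w i k)

def IsNondegPosSol (n m : ℕ) (c : Fin n → Fin m → ℝ) (w : Fin m → Fin n → ℝ)
    (z : Fin n → ℝ) : Prop :=
  (∀ k, 0 < z k) ∧ sysMap n m c w z = 0 ∧
    ∃ f' : (Fin n → ℝ) →L[ℝ] (Fin n → ℝ),
      HasFDerivAt (sysMap n m c w) f' z ∧ LinearMap.det f'.toLinearMap ≠ 0

section Aux

open Filter Topology Metric

/-- Parameter space: the exponent vectors. -/
private abbrev Pn (n : ℕ) := Fin (n+2) → Fin n → ℝ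

/-- Solution space. -/
private abbrev En (n : ℕ) := Fin n → ℝ

/-- The system map, jointly in exponents and point. -/
private noncomputable def Fm (n : ℕ) (c : Fin n → Fin (n+2) → ℝ) : Pn n × En n → En n :=
  fun p => sysMap n (n+2) c p.1 p.2

variable {n : ℕ}

private lemma isOpen_posSet :
    IsOpen {p : Pn n × En n | ∀ k, 0 < p.2 k} := by
  have h : {p : Pn n × En n | ∀ k, 0 < p.2 k}
      = ⋂ k, {p : Pn n × En n | 0 < p.2 k} := by
    ext p; simp [Set.mem_iInter]
  rw [h]
  exact isOpen_iInter_of_finite fun k =>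
    isOpen_lt continuous_const ((continuous_apply k).comp continuous_snd)

set_option maxHeartbeats 1000000 in
private lemma contDiffAt_F (c : Fin n → Fin (n+2) → ℝ)
    (p : Pn n × En n) (hp : ∀ k, 0 < p.2 k) :
    ContDiffAt ℝ 1 (Fm n c) p := by
  unfold Fm sysMap
  rw [contDiffAt_pi]
  intro j
  apply ContDiffAt.sum
  intro i _
  refine contDiffAt_const.mul (contDiffAt_prod fun k _ => ?_)
  have h2 : ContDiffAt ℝ 1 (fun q : Pn n × En n => q.2 k) p :=
    (((ContinuousLinearMap.proj (R := ℝ) (φ := fun _ : Fin n => ℝ) k).comp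
      (ContinuousLinearMap.snd ℝ (Pn n) (En n))).contDiff).contDiffAt
  have h1 : ContDiffAt ℝ 1 (fun q : Pn n × En n => q.1 i k) p :=
    (((ContinuousLinearMap.proj (R := ℝ) (φ := fun _ : Fin n => ℝ) k).comp
      ((ContinuousLinearMap.proj (R := ℝ) (φ := fun _ : Fin (n+2) => Fin n → ℝ) i).comp
        (ContinuousLinearMap.fst ℝ (Pn n) (En n)))).contDiff).contDiffAt
  exact h2.rpow h1 (hp k).ne'

/-- The partial derivative (in the point variable) of the system map. -/
private lemma hasD (c : Fin n → Fin (n+2) → ℝ) (p : Pn n × En n) (hp : ∀ k, 0 < p.2 k) :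
    HasFDerivAt (sysMap n (n+2) c p.1)
      ((fderiv ℝ (Fm n c) p).comp (ContinuousLinearMap.inr ℝ (Pn n) (En n))) p.2 := by
  have h1 : HasFDerivAt (Fm n c) (fderiv ℝ (Fm n c) p) p :=
    ((contDiffAt_F c p hp).differentiableAt one_ne_zero).hasFDerivAt
  have h2 : HasFDerivAt (fun z : En n => ((p.1, z) : Pn n × En n))
      (ContinuousLinearMap.inr ℝ (Pn n) (En n)) p.2 := hasFDerivAt_prodMk_right p.1 p.2
  exact h1.comp p.2 h2

set_option maxHeartbeats 1000000 in
private lemma persist (c : Fin n → Fin (n+2) → ℝ) (w : Fin (n+2) → Fin n → ℝ)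
    (z₀ : Fin n → ℝ) (h : IsNondegPosSol n (n+2) c w z₀) :
    ∃ ζ : (Fin (n+2) → Fin n → ℝ) → (Fin n → ℝ),
      Filter.Tendsto ζ (𝓝 w) (𝓝 z₀) ∧
      ∀ᶠ w' in 𝓝 w, IsNondegPosSol n (n+2) c w' (ζ w') := by
  classical
  obtain ⟨hpos, hzero, f₀, hf₀, hdet⟩ := h
  have hpos' : ∀ k, 0 < ((w, z₀) : Pn n × En n).2 k := hpos
  have hΩnhds : {p : Pn n × En n | ∀ k, 0 < p.2 k} ∈ 𝓝 ((w, z₀) : Pn n × En n) :=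
    isOpen_posSet.mem_nhds hpos
  have hf₀eq : f₀ = (fderiv ℝ (Fm n c) (w, z₀)).comp (ContinuousLinearMap.inr ℝ (Pn n) (En n)) :=
    hf₀.unique (hasD c (w, z₀) hpos')
  set B := (fderiv ℝ (Fm n c) (w, z₀)).comp (ContinuousLinearMap.inr ℝ (Pn n) (En n)) with hBdef
  set A := (fderiv ℝ (Fm n c) (w, z₀)).comp (ContinuousLinearMap.inl ℝ (Pn n) (En n)) with hAdef
  have hdetB : LinearMap.det B.toLinearMap ≠ 0 := hf₀eq ▸ hdet
  have hsplit : ∀ (p : Pn n) (v : En n), fderiv ℝ (Fm n c) (w, z₀) (p, v) = A p + B v := by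
    intro p v
    have hpv : ((p, v) : Pn n × En n) = (p, 0) + (0, v) := by simp [Prod.ext_iff]
    rw [hpv, map_add]
    rfl
  set eB : En n ≃L[ℝ] En n :=
    (LinearMap.equivOfDetNeZero B.toLinearMap hdetB).toContinuousLinearEquiv with heBdef
  have heB : ∀ v, eB v = B v := fun v => rfl
  set DG : (Pn n × En n) →L[ℝ] (Pn n × En n) :=
    (ContinuousLinearMap.fst ℝ (Pn n) (En n)).prod (fderiv ℝ (Fm n c) (w, z₀)) with hDGdef
  set MG : (Pn n × En n) →L[ℝ] (Pn n × En n) :=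
    (ContinuousLinearMap.fst ℝ (Pn n) (En n)).prod
      ((eB.symm : En n →L[ℝ] En n).comp
        ((ContinuousLinearMap.snd ℝ (Pn n) (En n))
          - A.comp (ContinuousLinearMap.fst ℝ (Pn n) (En n)))) with hMGdef
  have hleft : Function.LeftInverse MG DG := by
    rintro ⟨p, v⟩
    show ((p, eB.symm (fderiv ℝ (Fm n c) (w, z₀) (p, v) - A p)) : Pn n × En n) = (p, v)
    rw [hsplit]
    simp only [add_sub_cancel_left]
    rw [← heB v, eB.symm_apply_apply]
  have hright : Function.RightInverse MG DG := by
    rintro ⟨p, u⟩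
    show ((p, fderiv ℝ (Fm n c) (w, z₀) (p, eB.symm (u - A p))) : Pn n × En n) = (p, u)
    rw [hsplit, ← heB (eB.symm (u - A p)), eB.apply_symm_apply]
    simp
  set DGe : (Pn n × En n) ≃L[ℝ] (Pn n × En n) :=
    ContinuousLinearEquiv.equivOfInverse DG MG hleft hright with hDGedef
  set G : Pn n × En n → Pn n × En n := fun p => (p.1, Fm n c p) with hGdef
  have hGs : HasStrictFDerivAt G (DGe : (Pn n × En n) →L[ℝ] (Pn n × En n)) (w, z₀) := by
    have hh := HasStrictFDerivAt.prodMk hasStrictFDerivAt_fst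
      ((contDiffAt_F c (w, z₀) hpos').hasStrictFDerivAt one_ne_zero)
    exact hh
  set li : Pn n × En n → Pn n × En n := hGs.localInverse G _ _ with hlidef
  have hGa : G (w, z₀) = ((w, 0) : Pn n × En n) := Prod.ext rfl hzero
  have h1t : Tendsto (fun w' : Pn n => ((w', (0 : En n)) : Pn n × En n)) (𝓝 w) (𝓝 (w, 0)) :=
    ((continuous_id.prodMk continuous_const).tendsto w)
  have h2t : Tendsto li (𝓝 ((w, 0) : Pn n × En n)) (𝓝 ((w, z₀) : Pn n × En n)) := by
    have := hGs.localInverse_tendsto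
    rwa [hGa] at this
  refine ⟨fun w' => (li (w', 0)).2, ?_, ?_⟩
  · exact (continuous_snd.tendsto ((w, z₀) : Pn n × En n)).comp (h2t.comp h1t)
  · have evR : ∀ᶠ y in 𝓝 ((w, 0) : Pn n × En n), G (li y) = y := by
      have := hGs.eventually_right_inverse
      rwa [hGa] at this
    have hfderivCont : ContinuousOn (fderiv ℝ (Fm n c)) {p : Pn n × En n | ∀ k, 0 < p.2 k} := by
      have hCOn : ContDiffOn ℝ 1 (Fm n c) {p : Pn n × En n | ∀ k, 0 < p.2 k} :=
        fun p hp => (contDiffAt_F c p hp).contDiffWithinAt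
      exact hCOn.continuousOn_fderiv_of_isOpen isOpen_posSet le_rfl
    have hdetCont : ContinuousAt (fun p : Pn n × En n =>
        ((fderiv ℝ (Fm n c) p).comp (ContinuousLinearMap.inr ℝ (Pn n) (En n))).det) (w, z₀) := by
      have hcomp : Continuous fun L : (Pn n × En n) →L[ℝ] En n =>
          (L.comp (ContinuousLinearMap.inr ℝ (Pn n) (En n))).det :=
        ContinuousLinearMap.continuous_det.comp
          (continuous_id.clm_comp_const (ContinuousLinearMap.inr ℝ (Pn n) (En n)))
      exact hcomp.continuousAt.comp (hfderivCont.continuousAt hΩnhds)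
    have hdetne : ((fderiv ℝ (Fm n c) (w, z₀)).comp
        (ContinuousLinearMap.inr ℝ (Pn n) (En n))).det ≠ 0 := hdetB
    have ev3 : ∀ᶠ p in 𝓝 ((w, z₀) : Pn n × En n), (∀ k, 0 < p.2 k) ∧
        ((fderiv ℝ (Fm n c) p).comp (ContinuousLinearMap.inr ℝ (Pn n) (En n))).det ≠ 0 := by
      have e1 : ∀ᶠ p in 𝓝 ((w, z₀) : Pn n × En n), (∀ k, 0 < p.2 k) := hΩnhds
      exact e1.and (hdetCont.eventually_ne hdetne)
    have ev4 := h2t.eventually ev3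
    have ev5 := h1t.eventually (evR.and ev4)
    refine ev5.mono ?_
    rintro w' ⟨hGli, hposli, hdetli⟩
    have h1' : (li (w', 0)).1 = w' := congrArg Prod.fst hGli
    have h2' : Fm n c (li (w', 0)) = 0 := congrArg Prod.snd hGli
    refine ⟨hposli, ?_, ?_⟩
    · show sysMap n (n+2) c w' (li (w', 0)).2 = 0
      have h3' : sysMap n (n+2) c (li (w', 0)).1 (li (w', 0)).2 = 0 := h2'
      rw [h1'] at h3'
      exact h3'
    · refine ⟨(fderiv ℝ (Fm n c) (w', (li (w', 0)).2)).comp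
        (ContinuousLinearMap.inr ℝ (Pn n) (En n)), ?_, ?_⟩
      · exact hasD c (w', (li (w', 0)).2) hposli
      · have heq : ((w', (li (w', 0)).2) : Pn n × En n) = li (w', 0) :=
          Prod.ext h1'.symm rfl
        rw [heq]
        exact hdetli

end Aux

theorem stmt18 (n N : ℕ) (c : Fin n → Fin (n+2) → ℝ) (w : Fin (n+2) → Fin n → ℝ)
    (S : Finset (Fin n → ℝ)) (hScard : S.card = N)
    (hS : ∀ z ∈ S, IsNondegPosSol n (n+2) c w z) :
    ∀ ε : ℝ, 0 < ε → ∃ q : Fin (n+2) → Fin n → ℚ,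
      (∀ i k, |(q i k : ℝ) - w i k| < ε) ∧
      ∃ T : Finset (Fin n → ℝ), N ≤ T.card ∧
        ∀ z ∈ T, IsNondegPosSol n (n+2) c (fun i k => (q i k : ℝ)) z := by
  classical
  intro ε hε
  choose! ζ hζt hζev using fun z₀ (hz : z₀ ∈ S) => persist c w z₀ (hS z₀ hz)
  have hall : ∀ᶠ w' in nhds w, ∀ z₀ ∈ S, IsNondegPosSol n (n+2) c w' (ζ z₀ w') :=
    (Filter.eventually_all_finset S).2 hζev
  have hsep : ∀ᶠ w' in nhds w, ∀ a ∈ S, ∀ b ∈ S, a ≠ b → ζ a w' ≠ ζ b w' := by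
    rw [Filter.eventually_all_finset]
    intro a ha
    rw [Filter.eventually_all_finset]
    intro b hb
    by_cases hab : a = b
    · exact Filter.Eventually.of_forall fun w' h => absurd hab h
    · have hd : (0 : ℝ) < dist a b / 2 := by
        have := dist_pos.2 hab
        linarith
      filter_upwards [(hζt a ha).eventually (Metric.ball_mem_nhds a hd),
        (hζt b hb).eventually (Metric.ball_mem_nhds b hd)] with w' m1 m2 _ heq
      have hcontra : dist a b < dist a b := by
        calc dist a b ≤ dist a (ζ a w') + dist (ζ a w') b := dist_triangle _ _ _
          _ < dist a b / 2 + dist a b / 2 := by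
              refine add_lt_add ?_ ?_
              · rw [dist_comm]; exact m1
              · rw [heq]; exact m2
          _ = dist a b := by ring
      exact absurd hcontra (lt_irrefl _)
  obtain ⟨δ, hδ, hball⟩ := Metric.eventually_nhds_iff.1 (hall.and hsep)
  set δ' : ℝ := min δ ε with hδ'def
  have hδ' : 0 < δ' := lt_min hδ hε
  have hq : ∀ i k, ∃ q : ℚ, w i k < (q : ℝ) ∧ (q : ℝ) < w i k + δ' / 2 :=
    fun i k => exists_rat_btwn (by linarith)
  choose q hq1 hq2 using hq
  have hqw : ∀ i k, |(q i k : ℝ) - w i k| < δ' := by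
    intro i k
    rw [abs_sub_lt_iff]
    constructor
    · have := hq2 i k; linarith
    · have := hq1 i k; linarith
  refine ⟨q, fun i k => lt_of_lt_of_le (hqw i k) (min_le_right δ ε), ?_⟩
  set W : Fin (n+2) → Fin n → ℝ := fun i k => (q i k : ℝ) with hWdef
  have hWdist : dist W w < δ := by
    rw [dist_pi_lt_iff hδ]
    intro i
    rw [dist_pi_lt_iff hδ]
    intro k
    rw [Real.dist_eq]
    exact lt_of_lt_of_le (hqw i k) (min_le_left δ ε)
  obtain ⟨hallW, hsepW⟩ := hball hWdist
  refine ⟨S.image fun z₀ => ζ z₀ W, ?_, ?_⟩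
  · have hinj : Set.InjOn (fun z₀ => ζ z₀ W) ↑S := by
      intro a ha b hb hab
      by_contra hne
      exact hsepW a ha b hb hne hab
    rw [Finset.card_image_of_injOn hinj, hScard]
  · intro z hz
    obtain ⟨z₀, hz₀, rfl⟩ := Finset.mem_image.1 hz
    exact hallW z₀ hz₀
end
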